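/- arXiv:1408.1887 — 4 statements merged into one kernel-verified Lean document; each statement's English description precedes it below -/
import Mathlib

section
/- Let h : ℝ^d → ℝ be continuously differentiable with L_h-Lipschitz continuous gradient, let Ω ⊆ ℝ^d be nonempty and closed, and fix t > L_h. Then for any u ∈ Ω and any u⁺ ∈ P_Ω(u - (1/t)∇h(u)) (a projection of the gradient step onto Ω), we have h(u⁺) ≤ h(u) - (1/2)(t - L_h)‖u⁺ - u‖². -/
open InnerProductSpace Set

lemma descent {d : ℕ} (h : EuclideanSpace ℝ (Fin d) → ℝ)
    (g : EuclideanSpace ℝ (Fin d) → EuclideanSpace ℝ (Fin d))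
    (hgrad : ∀ u, HasGradientAt h (g u) u)
    (L : ℝ) (hLip : ∀ u v, ‖g u - g v‖ ≤ L * ‖u - v‖)
    (x y : EuclideanSpace ℝ (Fin d)) :
    h y ≤ h x + inner ℝ (g x) (y - x) + L / 2 * ‖y - x‖ ^ 2 := by
  set v := y - x with hv
  set φ : ℝ → ℝ := fun s => h (x + s • v) - s * inner ℝ (g x) v - L * ‖v‖ ^ 2 * s ^ 2 / 2 with hφ
  have hder : ∀ s : ℝ, HasDerivAt φ
      ((inner ℝ (g (x + s • v)) v : ℝ) - inner ℝ (g x) v - L * ‖v‖ ^ 2 * s) s := by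
    intro s
    have hc : HasDerivAt (fun s : ℝ => x + s • v) v s := by
      simpa using ((hasDerivAt_id s).smul_const v).const_add x
    have h1 : HasDerivAt (fun s : ℝ => h (x + s • v)) ((inner ℝ (g (x + s • v)) v : ℝ)) s := by
      have := (hgrad (x + s • v)).hasFDerivAt.comp_hasDerivAt s hc
      simp at this
      exact this
    have h2 : HasDerivAt (fun s : ℝ => s * (inner ℝ (g x) v : ℝ)) (inner ℝ (g x) v) s := by
      simpa using (hasDerivAt_id s).mul_const (inner ℝ (g x) v : ℝ)
    have h3 : HasDerivAt (fun s : ℝ => L * ‖v‖ ^ 2 * s ^ 2 / 2) (L * ‖v‖ ^ 2 * s) s := by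
      have := ((hasDerivAt_pow 2 s).const_mul (L * ‖v‖ ^ 2)).div_const 2
      convert this using 1
      · rfl
      · rfl
      norm_num
      ring
    exact (h1.sub h2).sub h3
  have hanti : AntitoneOn φ (Icc (0:ℝ) 1) := by
    apply antitoneOn_of_deriv_nonpos (convex_Icc 0 1)
    · exact fun s _ => (hder s).differentiableAt.continuousAt.continuousWithinAt
    · intro s _
      exact (hder s).differentiableAt.differentiableWithinAt
    · intro s hs
      rw [(hder s).deriv]
      rw [interior_Icc] at hs
      have hb : (inner ℝ (g (x + s • v)) v : ℝ) - inner ℝ (g x) v ≤ L * ‖v‖ ^ 2 * s := by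
        have h1 : (inner ℝ (g (x + s • v)) v : ℝ) - inner ℝ (g x) v
            = inner ℝ (g (x + s • v) - g x) v := by
          rw [inner_sub_left]
        rw [h1]
        calc (inner ℝ (g (x + s • v) - g x) v : ℝ) ≤ ‖g (x + s • v) - g x‖ * ‖v‖ :=
              real_inner_le_norm _ _
          _ ≤ L * ‖x + s • v - x‖ * ‖v‖ := by
              have := hLip (x + s • v) x
              nlinarith [norm_nonneg v]
          _ = L * ‖v‖ ^ 2 * s := by
              have : ‖x + s • v - x‖ = s * ‖v‖ := by
                simp [norm_smul, abs_of_nonneg hs.1.le]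
              rw [this]; ring
      linarith
  have key := hanti (Set.left_mem_Icc.mpr zero_le_one) (Set.right_mem_Icc.mpr zero_le_one) zero_le_one
  simp only [hφ, zero_smul, add_zero, zero_mul, one_smul, one_mul, one_pow, mul_one] at key
  have : x + v = y := by rw [hv]; abel
  rw [this] at key
  linarith

/-- **Sufficient decrease property** (Lemma: projected gradient step onto a nonempty
closed, possibly nonconvex, set). -/
theorem stmt_0 {d : ℕ} (h : EuclideanSpace ℝ (Fin d) → ℝ)
    (g : EuclideanSpace ℝ (Fin d) → EuclideanSpace ℝ (Fin d))
    (hC1 : ContDiff ℝ 1 h)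
    (hgrad : ∀ u, HasGradientAt h (g u) u)
    (L t : ℝ)
    (hLip : ∀ u v, ‖g u - g v‖ ≤ L * ‖u - v‖)
    (ht : L < t)
    (Ω : Set (EuclideanSpace ℝ (Fin d)))
    (hne : Ω.Nonempty) (hcl : IsClosed Ω)
    (u : EuclideanSpace ℝ (Fin d)) (hu : u ∈ Ω)
    (up : EuclideanSpace ℝ (Fin d))
    (hupmem : up ∈ Ω)
    (hproj : ∀ w ∈ Ω, ‖up - (u - (1/t) • g u)‖ ≤ ‖w - (u - (1/t) • g u)‖) :
    h up ≤ h u - (1/2) * (t - L) * ‖up - u‖^2 := by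
  by_cases hvz : up = u
  · simp [hvz]
  have hvpos : (0:ℝ) < ‖up - u‖ := by
    rw [norm_pos_iff]; exact sub_ne_zero_of_ne hvz
  have hL0 : 0 ≤ L := by
    have h1 := hLip u up
    have h2 : (0:ℝ) ≤ ‖g u - g up‖ := norm_nonneg _
    have h3 : ‖u - up‖ = ‖up - u‖ := norm_sub_rev _ _
    nlinarith
  have htpos : 0 < t := lt_of_le_of_lt hL0 ht
  -- projection inequality
  have hp := hproj u hu
  have hrw : up - (u - (1/t) • g u) = (up - u) + (1/t) • g u := by abel
  have hrw2 : u - (u - (1/t) • g u) = (1/t) • g u := by abel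
  rw [hrw, hrw2] at hp
  have hpsq : ‖(up - u) + (1/t) • g u‖ ^ 2 ≤ ‖(1/t) • g u‖ ^ 2 := by
    exact pow_le_pow_left₀ (norm_nonneg _) hp 2
  rw [norm_add_sq_real] at hpsq
  have hinner : (inner ℝ (up - u) ((1/t) • g u) : ℝ) = (1/t) * inner ℝ (up - u) (g u) :=
    real_inner_smul_right _ _ _
  rw [hinner] at hpsq
  have hkey : (inner ℝ (up - u) (g u) : ℝ) ≤ -(t/2) * ‖up - u‖ ^ 2 := by
    have h1 : ‖up - u‖ ^ 2 + 2 * ((1/t) * inner ℝ (up - u) (g u)) ≤ 0 := by linarith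
    have h3 : 1/t * (inner ℝ (up - u) (g u) : ℝ) ≤ -‖up - u‖ ^ 2 / 2 := by linarith
    have h4 : (inner ℝ (up - u) (g u) : ℝ) = t * (1/t * inner ℝ (up - u) (g u)) := by
      field_simp
    rw [h4]
    calc t * (1/t * (inner ℝ (up - u) (g u) : ℝ)) ≤ t * (-‖up - u‖ ^ 2 / 2) :=
          mul_le_mul_of_nonneg_left h3 htpos.le
      _ = -(t/2) * ‖up - u‖ ^ 2 := by ring
  have hd := descent h g hgrad L hLip u up
  have hcomm : (inner ℝ (g u) (up - u) : ℝ) = inner ℝ (up - u) (g u) := real_inner_comm _ _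
  rw [hcomm] at hd
  nlinarith [hd, hkey]
end

section
/- Let F(x, y, z) = Σ_{j=1}^m ‖S_j(x) ⊙ y - z_j‖² on ℂⁿ × ℂⁿ × (ℂⁿ)^m, where each S_j is a permutation operator on ℂⁿ. Then for fixed y ∈ ℂⁿ and z ∈ (ℂⁿ)^m, the map x ↦ ∇_x F(x, y, z) is Lipschitz continuous with (best) Lipschitz constant L_x(y, z) = 2‖Σ_{j=1}^m S_j*(ȳ ⊙ y)‖_∞. -/
open scoped ComplexConjugate

variable {n m : ℕ}

noncomputable def Amap (σ : Equiv.Perm (Fin n)) (y : EuclideanSpace ℂ (Fin n)) :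
    EuclideanSpace ℂ (Fin n) →L[ℂ] EuclideanSpace ℂ (Fin n) :=
  LinearMap.toContinuousLinearMap
  { toFun := fun x => (WithLp.equiv 2 (Fin n → ℂ)).symm (fun i => x (σ i) * y i)
    map_add' := by
      intro a b; ext i
      simp [WithLp.equiv_symm_apply, add_mul]
    map_smul' := by
      intro c a; ext i
      simp [WithLp.equiv_symm_apply, mul_assoc] }

lemma Amap_apply (σ : Equiv.Perm (Fin n)) (y x : EuclideanSpace ℂ (Fin n)) (i : Fin n) :
    Amap σ y x i = x (σ i) * y i := rfl

noncomputable def gmap (S : Fin m → Equiv.Perm (Fin n)) (y : EuclideanSpace ℂ (Fin n))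
    (z : Fin m → EuclideanSpace ℂ (Fin n)) (x : EuclideanSpace ℂ (Fin n)) :
    EuclideanSpace ℂ (Fin n) :=
  (WithLp.equiv 2 (Fin n → ℂ)).symm fun k =>
    2 * ∑ j, conj (y ((S j).symm k)) * (x k * y ((S j).symm k) - z j ((S j).symm k))

lemma gmap_apply (S : Fin m → Equiv.Perm (Fin n)) (y : EuclideanSpace ℂ (Fin n))
    (z : Fin m → EuclideanSpace ℂ (Fin n)) (x : EuclideanSpace ℂ (Fin n)) (k : Fin n) :
    gmap S y z x k =
      2 * ∑ j, conj (y ((S j).symm k)) * (x k * y ((S j).symm k) - z j ((S j).symm k)) := rfl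

lemma real_inner_eq_re (u v : EuclideanSpace ℂ (Fin n)) :
    (inner ℝ u v : ℝ) = (inner ℂ u v : ℂ).re := by
  simp only [PiLp.inner_apply, RCLike.inner_apply, Complex.re_sum]
  rfl

lemma inner_g (S : Fin m → Equiv.Perm (Fin n)) (y : EuclideanSpace ℂ (Fin n))
    (z : Fin m → EuclideanSpace ℂ (Fin n)) (x h : EuclideanSpace ℂ (Fin n)) :
    (inner ℂ (gmap S y z x) h : ℂ) =
      ∑ j, 2 * (inner ℂ (Amap (S j) y x - z j) (Amap (S j) y h) : ℂ) := by
  simp only [PiLp.inner_apply, gmap_apply, RCLike.inner_apply']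
  have lhs : ∀ k : Fin n,
      conj (2 * ∑ j, conj (y ((S j).symm k)) * (x k * y ((S j).symm k) - z j ((S j).symm k))) * h k
        = ∑ j : Fin m, 2 * (conj (conj (y ((S j).symm k)) * (x k * y ((S j).symm k) - z j ((S j).symm k))) * h k) := by
    intro k
    rw [map_mul, map_sum, map_ofNat, Finset.mul_sum, Finset.sum_mul]
    exact Finset.sum_congr rfl fun j _ => by ring
  simp only [lhs]
  rw [Finset.sum_comm]
  refine Finset.sum_congr rfl fun j _ => ?_
  rw [Finset.mul_sum, ← Equiv.sum_comp (S j).symm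
    (fun i => 2 * (conj ((Amap (S j) y x - z j) i) * ((Amap (S j) y) h i)))]
  refine Finset.sum_congr rfl fun k _ => ?_
  simp only [PiLp.sub_apply, Amap_apply, Equiv.apply_symm_apply, map_mul, map_sub]
  rw [(S j).apply_symm_apply k]
  simp only [Complex.conj_conj]
  ring

lemma hasGradientAt_F (S : Fin m → Equiv.Perm (Fin n)) (y : EuclideanSpace ℂ (Fin n))
    (z : Fin m → EuclideanSpace ℂ (Fin n)) (x : EuclideanSpace ℂ (Fin n)) :
    HasGradientAt (fun x : EuclideanSpace ℂ (Fin n) => ∑ j,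
      ‖(WithLp.equiv 2 (Fin n → ℂ)).symm (fun i => x (S j i) * y i) - z j‖^2)
      (gmap S y z x) x := by
  rw [hasGradientAt_iff_hasFDerivAt]
  have hw : ∀ j, HasFDerivAt (fun t : EuclideanSpace ℂ (Fin n) => Amap (S j) y t - z j)
      ((Amap (S j) y).restrictScalars ℝ) x :=
    fun j => (((Amap (S j) y).restrictScalars ℝ).hasFDerivAt).sub_const (z j)
  have hj : ∀ j, HasFDerivAt (fun t : EuclideanSpace ℂ (Fin n) => ‖Amap (S j) y t - z j‖^2)
      ((fderivInnerCLM ℝ (Amap (S j) y x - z j, Amap (S j) y x - z j)).comp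
        (((Amap (S j) y).restrictScalars ℝ).prod ((Amap (S j) y).restrictScalars ℝ))) x := by
    intro j
    have h1 := (hw j).inner ℝ (hw j)
    have h2 : (fun t : EuclideanSpace ℂ (Fin n) =>
        (inner ℝ (Amap (S j) y t - z j) (Amap (S j) y t - z j) : ℝ)) =
        fun t => ‖Amap (S j) y t - z j‖^2 :=
      funext fun t => real_inner_self_eq_norm_sq _
    rwa [h2] at h1
  have hsum := HasFDerivAt.fun_sum (fun j (_ : j ∈ Finset.univ) => hj j)
  have key : InnerProductSpace.toDual ℝ (EuclideanSpace ℂ (Fin n)) (gmap S y z x) =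
      ∑ j, (fderivInnerCLM ℝ (Amap (S j) y x - z j, Amap (S j) y x - z j)).comp
        (((Amap (S j) y).restrictScalars ℝ).prod ((Amap (S j) y).restrictScalars ℝ)) := by
    ext h
    rw [InnerProductSpace.toDual_apply_apply]
    simp only [ContinuousLinearMap.sum_apply, ContinuousLinearMap.comp_apply,
      ContinuousLinearMap.prod_apply, fderivInnerCLM_apply,
      ContinuousLinearMap.coe_restrictScalars']
    have : ∀ j : Fin m, (inner ℝ (Amap (S j) y x - z j) (Amap (S j) y h) : ℝ) +
        (inner ℝ (Amap (S j) y h) (Amap (S j) y x - z j) : ℝ) =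
        2 * (inner ℝ (Amap (S j) y x - z j) (Amap (S j) y h) : ℝ) := by
      intro j; rw [real_inner_comm (Amap (S j) y h)]; ring
    rw [Finset.sum_congr rfl fun j _ => this j]
    rw [real_inner_eq_re, inner_g, Complex.re_sum]
    refine Finset.sum_congr rfl fun j _ => ?_
    rw [real_inner_eq_re]
    simp [Complex.ofReal_re]
  rw [key]
  exact hsum

lemma gmap_sub (S : Fin m → Equiv.Perm (Fin n)) (y : EuclideanSpace ℂ (Fin n))
    (z : Fin m → EuclideanSpace ℂ (Fin n)) (a b : EuclideanSpace ℂ (Fin n)) (k : Fin n) :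
    gmap S y z a k - gmap S y z b k =
      (((2 * ∑ j, Complex.normSq (y ((S j).symm k)) : ℝ)) : ℂ) * (a k - b k) := by
  simp only [gmap_apply]
  push_cast
  simp only [Complex.normSq_eq_conj_mul_self]
  rw [← mul_sub, ← Finset.sum_sub_distrib, mul_assoc, Finset.sum_mul]
  exact congrArg _ (Finset.sum_congr rfl fun j _ => by ring)

lemma norm_le_of_coord (C : ℝ) (hC : 0 ≤ C) (u v : EuclideanSpace ℂ (Fin n))
    (h : ∀ k, ‖u k‖ ≤ C * ‖v k‖) : ‖u‖ ≤ C * ‖v‖ := by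
  rw [EuclideanSpace.norm_eq, EuclideanSpace.norm_eq, ← Real.sqrt_sq hC,
    ← Real.sqrt_mul (sq_nonneg C)]
  apply Real.sqrt_le_sqrt
  rw [Finset.mul_sum]
  refine Finset.sum_le_sum fun k _ => ?_
  calc ‖u k‖^2 ≤ (C * ‖v k‖)^2 := by
        apply pow_le_pow_left₀ (norm_nonneg _) (h k)
    _ = C^2 * ‖v k‖^2 := by ring

/-- For `F(x) = Σ_j ‖S_j(x) ⊙ y - z_j‖²` with `y`, `z` fixed, the gradient map
`x ↦ ∇ₓF(x, y, z)` is Lipschitz with best constant `2‖Σ_j S_j*(ȳ ⊙ y)‖_∞`. -/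
theorem stmt_4 {n m : ℕ} (S : Fin m → Equiv.Perm (Fin n))
    (y : EuclideanSpace ℂ (Fin n)) (z : Fin m → EuclideanSpace ℂ (Fin n))
    (F : EuclideanSpace ℂ (Fin n) → ℝ)
    (hF : F = fun x => ∑ j,
      ‖(WithLp.equiv 2 (Fin n → ℂ)).symm (fun i => x (S j i) * y i) - z j‖^2)
    (G : EuclideanSpace ℂ (Fin n) → EuclideanSpace ℂ (Fin n))
    (hG : ∀ x, HasGradientAt F (G x) x)
    (Lx : ℝ)
    (hLx : Lx = 2 * ⨆ i, ‖∑ j, (starRingEnd ℂ) (y ((S j).symm i)) * y ((S j).symm i)‖) :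
    (∀ a b, ‖G a - G b‖ ≤ Lx * ‖a - b‖) ∧
      ∀ K : ℝ, 0 ≤ K → (∀ a b, ‖G a - G b‖ ≤ K * ‖a - b‖) → Lx ≤ K := by
  subst hF hLx
  have hGg : ∀ x, G x = gmap S y z x := fun x => (hG x).unique (hasGradientAt_F S y z x)
  set e : Fin n → ℝ := fun i => ∑ j, Complex.normSq (y ((S j).symm i)) with he
  have he_nonneg : ∀ i, 0 ≤ e i := fun i => Finset.sum_nonneg fun j _ => Complex.normSq_nonneg _
  have habs : ∀ i : Fin n,
      ‖∑ j, (starRingEnd ℂ) (y ((S j).symm i)) * y ((S j).symm i)‖ = e i := by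
    intro i
    have h1 : (∑ j, (starRingEnd ℂ) (y ((S j).symm i)) * y ((S j).symm i)) = ((e i : ℝ) : ℂ) := by
      rw [he]
      push_cast
      simp only [Complex.normSq_eq_conj_mul_self]
    rw [h1, Complex.norm_real, Real.norm_eq_abs, abs_of_nonneg (he_nonneg i)]
  simp only [habs]
  rcases Nat.eq_zero_or_pos n with hn | hn
  · subst hn
    constructor
    · intro a b
      have hab : a = b := Subsingleton.elim a b
      rw [hab, sub_self, sub_self, norm_zero, mul_zero]
    · intro K hK _
      have h0 : (⨆ i : Fin 0, e i) = 0 := Real.iSup_of_isEmpty _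
      rw [h0, mul_zero]
      exact hK
  · haveI : Nonempty (Fin n) := ⟨⟨0, hn⟩⟩
    obtain ⟨i₀, hi₀⟩ := Finite.exists_max e
    have hsup : (⨆ i, e i) = e i₀ :=
      le_antisymm (ciSup_le hi₀) (le_ciSup (Set.Finite.bddAbove (Set.finite_range e)) i₀)
    rw [hsup]
    constructor
    · intro a b
      rw [hGg a, hGg b]
      refine norm_le_of_coord _ (by have := he_nonneg i₀; linarith) _ _ fun k => ?_
      rw [PiLp.sub_apply, PiLp.sub_apply, gmap_sub, norm_mul]
      have : ‖(((2 * ∑ j, Complex.normSq (y ((S j).symm k)) : ℝ)) : ℂ)‖ = 2 * e k := by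
        rw [Complex.norm_real, Real.norm_eq_abs, abs_of_nonneg]
        have := he_nonneg k
        rw [he] at this
        simp only at this
        linarith
      rw [this]
      have h2 : 2 * e k ≤ 2 * e i₀ := by
        have := hi₀ k; linarith
      exact mul_le_mul_of_nonneg_right h2 (norm_nonneg _)
    · intro K hK hle
      have h1 := hle (EuclideanSpace.single i₀ (1:ℂ)) 0
      rw [hGg _, hGg 0] at h1
      have hv : gmap S y z (EuclideanSpace.single i₀ 1) - gmap S y z 0 =
          EuclideanSpace.single i₀ (((2 * e i₀ : ℝ)) : ℂ) := by
        ext k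
        rw [PiLp.sub_apply, gmap_sub]
        by_cases hk : k = i₀
        · subst hk
          simp only [EuclideanSpace.single_apply, if_pos rfl, PiLp.zero_apply, sub_zero,
            mul_one, he]
          push_cast
          ring
        · simp [EuclideanSpace.single_apply, hk]
      rw [hv, sub_zero, EuclideanSpace.norm_single, EuclideanSpace.norm_single] at h1
      have h2 : ‖(((2 * e i₀ : ℝ)) : ℂ)‖ = 2 * e i₀ := by
        rw [Complex.norm_real, Real.norm_eq_abs, abs_of_nonneg]
        have := he_nonneg i₀
        linarith
      rw [h2] at h1
      simpa using h1
end

section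
/- Let F(x, y, z) = Σ_{j=1}^m ‖S_j(x) ⊙ y - z_j‖² on ℂⁿ × ℂⁿ × (ℂⁿ)^m with permutation operators S_j. Then for fixed x and z, the map y ↦ ∇_y F(x, y, z) is Lipschitz with constant L_y(x, z) = 2‖Σ_{j=1}^m S_j(x̄ ⊙ x)‖_∞, and moreover ∇_y F(x, y, z) = 2 Σ_{j=1}^m [S_j(x̄ ⊙ x) ⊙ y - S_j(x̄) ⊙ z_j]. -/
open RealInnerProductSpace

noncomputable def hadCLM {n : ℕ} (c : EuclideanSpace ℂ (Fin n)) :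
    EuclideanSpace ℂ (Fin n) →L[ℝ] EuclideanSpace ℂ (Fin n) :=
  LinearMap.toContinuousLinearMap
  { toFun := fun y => (WithLp.equiv 2 (Fin n → ℂ)).symm (fun i => c i * y i)
    map_add' := by intro a b; ext i; simp [mul_add]
    map_smul' := by intro r a; ext i; simp [Complex.real_smul]; ring }

@[simp] lemma hadCLM_apply {n : ℕ} (c y : EuclideanSpace ℂ (Fin n)) (i : Fin n) :
    hadCLM c y i = c i * y i := rfl

lemma key_grad {n m : ℕ} (S : Fin m → Equiv.Perm (Fin n)) (x : EuclideanSpace ℂ (Fin n))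
    (z : Fin m → EuclideanSpace ℂ (Fin n)) (y : EuclideanSpace ℂ (Fin n)) :
    HasGradientAt (fun y : EuclideanSpace ℂ (Fin n) => ∑ j,
      ‖(WithLp.equiv 2 (Fin n → ℂ)).symm (fun i => x (S j i) * y i) - z j‖^2)
      ((WithLp.equiv 2 (Fin n → ℂ)).symm (fun i =>
        2 * ((∑ j, (starRingEnd ℂ) (x (S j i)) * x (S j i)) * y i
          - ∑ j, (starRingEnd ℂ) (x (S j i)) * z j i))) y := by
  classical
  let c : Fin m → EuclideanSpace ℂ (Fin n) :=
    fun j => (WithLp.equiv 2 (Fin n → ℂ)).symm (fun i => x (S j i))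
  let v : Fin m → EuclideanSpace ℂ (Fin n) := fun j => hadCLM (c j) y - z j
  rw [hasGradientAt_iff_hasFDerivAt]
  have hder : HasFDerivAt
      (fun y : EuclideanSpace ℂ (Fin n) => ∑ j, ⟪hadCLM (c j) y - z j, hadCLM (c j) y - z j⟫)
      (∑ j, ((fderivInnerCLM ℝ (v j, v j)).comp (((hadCLM (c j))).prod (hadCLM (c j))))) y := by
    apply HasFDerivAt.fun_sum
    intro j _
    exact HasFDerivAt.inner ℝ ((hadCLM (c j)).hasFDerivAt.sub_const (z j))
      ((hadCLM (c j)).hasFDerivAt.sub_const (z j))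
  have heq : (fun y : EuclideanSpace ℂ (Fin n) =>
        ∑ j, ⟪hadCLM (c j) y - z j, hadCLM (c j) y - z j⟫) =
      (fun y : EuclideanSpace ℂ (Fin n) => ∑ j : Fin m,
        ‖(WithLp.equiv 2 (Fin n → ℂ)).symm (fun i => x (S j i) * y i) - z j‖^2) := by
    funext y
    refine Finset.sum_congr rfl fun j _ => ?_
    rw [real_inner_self_eq_norm_sq]
    rfl
  rw [heq] at hder
  suffices hL : (InnerProductSpace.toDual ℝ (EuclideanSpace ℂ (Fin n)))
      ((WithLp.equiv 2 (Fin n → ℂ)).symm fun i =>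
        2 * ((∑ j : Fin m, (starRingEnd ℂ) (x (S j i)) * x (S j i)) * y i -
            ∑ j : Fin m, (starRingEnd ℂ) (x (S j i)) * z j i)) =
      ∑ j : Fin m, (fderivInnerCLM ℝ (v j, v j)).comp ((hadCLM (c j)).prod (hadCLM (c j))) by
    rw [hL]; exact hder
  ext h
  simp only [ContinuousLinearMap.coe_sum', Finset.sum_apply, ContinuousLinearMap.coe_comp',
    Function.comp_apply, ContinuousLinearMap.prod_apply, fderivInnerCLM_apply,
    InnerProductSpace.toDual_apply_apply, PiLp.inner_apply, Complex.inner, hadCLM_apply,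
    WithLp.equiv_symm_apply, PiLp.toLp_apply]
  have hre : ∀ p q : ℂ, (p * (starRingEnd ℂ) q).re + (q * (starRingEnd ℂ) p).re
      = (2 * (p * (starRingEnd ℂ) q)).re := by
    intro p q
    simp [Complex.mul_re, mul_comm]
    ring
  simp only [← Finset.sum_add_distrib]
  simp only [hre, ← Complex.re_sum]
  congr 1
  rw [Finset.sum_comm]
  refine Finset.sum_congr rfl fun i _ => ?_
  have hv : ∀ j : Fin m, v j i = x (S j i) * y i - z j i := fun j => rfl
  have hc : ∀ j : Fin m, c j i = x (S j i) := fun j => rfl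
  simp only [hv, hc]
  simp only [map_mul, map_sub, map_sum, Complex.conj_conj, map_ofNat, sub_mul, mul_sub,
    Finset.sum_mul, Finset.mul_sum, Finset.sum_sub_distrib]
  congr 1 <;> exact Finset.sum_congr rfl fun j _ => by ring


/-- For `F(x, y, z) = Σ_j ‖S_j(x) ⊙ y - z_j‖²` with `x`, `z` fixed, the map
`y ↦ ∇_yF(x, y, z)` is Lipschitz with constant `2‖Σ_j S_j(x̄ ⊙ x)‖_∞`, and moreover
`∇_yF(x, y, z) = 2 Σ_j [S_j(x̄ ⊙ x) ⊙ y - S_j(x̄) ⊙ z_j]`. -/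
theorem stmt_5 {n m : ℕ} (S : Fin m → Equiv.Perm (Fin n))
    (x : EuclideanSpace ℂ (Fin n)) (z : Fin m → EuclideanSpace ℂ (Fin n))
    (F : EuclideanSpace ℂ (Fin n) → ℝ)
    (hF : F = fun y => ∑ j,
      ‖(WithLp.equiv 2 (Fin n → ℂ)).symm (fun i => x (S j i) * y i) - z j‖^2)
    (G : EuclideanSpace ℂ (Fin n) → EuclideanSpace ℂ (Fin n))
    (hG : ∀ y, HasGradientAt F (G y) y) :
    (∀ y, G y = (WithLp.equiv 2 (Fin n → ℂ)).symm (fun i =>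
        2 * ((∑ j, (starRingEnd ℂ) (x (S j i)) * x (S j i)) * y i
          - ∑ j, (starRingEnd ℂ) (x (S j i)) * z j i))) ∧
      ∀ a b, ‖G a - G b‖ ≤
        (2 * ⨆ i, ‖∑ j, (starRingEnd ℂ) (x (S j i)) * x (S j i)‖) * ‖a - b‖ := by
  subst hF
  have h1 : ∀ y, G y = (WithLp.equiv 2 (Fin n → ℂ)).symm (fun i =>
      2 * ((∑ j, (starRingEnd ℂ) (x (S j i)) * x (S j i)) * y i
        - ∑ j, (starRingEnd ℂ) (x (S j i)) * z j i)) :=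
    fun y => (hG y).unique (key_grad S x z y)
  refine ⟨h1, fun a b => ?_⟩
  set C : Fin n → ℂ := fun i => ∑ j, (starRingEnd ℂ) (x (S j i)) * x (S j i) with hC
  set M : ℝ := ⨆ i, ‖C i‖ with hM
  have hM0 : 0 ≤ M := Real.iSup_nonneg fun i => norm_nonneg _
  have hK0 : 0 ≤ 2 * M := by linarith
  have hle : ∀ i, ‖C i‖ ≤ M := fun i =>
    le_ciSup (f := fun i => ‖C i‖) (Set.Finite.bddAbove (Set.finite_range _)) i
  have hdiff : ∀ i, (G a - G b) i = 2 * C i * (a i - b i) := by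
    intro i
    have : (G a - G b) i = G a i - G b i := rfl
    rw [this, h1 a, h1 b]
    simp only [WithLp.equiv_symm_apply, PiLp.toLp_apply]
    ring
  rw [EuclideanSpace.norm_eq, EuclideanSpace.norm_eq]
  have hsum : ∑ i, ‖(G a - G b) i‖ ^ 2 ≤ (2 * M)^2 * ∑ i, ‖(a - b) i‖ ^ 2 := by
    rw [Finset.mul_sum]
    refine Finset.sum_le_sum fun i _ => ?_
    rw [hdiff i]
    have habs : ‖2 * C i * (a i - b i)‖ = 2 * ‖C i‖ * ‖(a - b) i‖ := by
      have : (a - b) i = a i - b i := rfl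
      rw [this]
      simp [map_mul, mul_assoc]
    rw [habs]
    have h2 : 2 * ‖C i‖ * ‖(a - b) i‖ ≤ 2 * M * ‖(a - b) i‖ := by
      have := hle i
      have hn : (0:ℝ) ≤ ‖(a - b) i‖ := norm_nonneg _
      nlinarith
    calc (2 * ‖C i‖ * ‖(a - b) i‖) ^ 2 ≤ (2 * M * ‖(a - b) i‖) ^ 2 := by
          apply pow_le_pow_left₀ (by positivity) h2
      _ = (2 * M) ^ 2 * ‖(a - b) i‖ ^ 2 := by ring
  calc Real.sqrt (∑ i, ‖(G a - G b) i‖ ^ 2)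
      ≤ Real.sqrt ((2 * M)^2 * ∑ i, ‖(a - b) i‖ ^ 2) := Real.sqrt_le_sqrt hsum
    _ = 2 * M * Real.sqrt (∑ i, ‖(a - b) i‖ ^ 2) := by
        rw [Real.sqrt_mul (sq_nonneg _), Real.sqrt_sq hK0]
end

section
/- Let h : ℝ^d → ℝ be continuously differentiable with L-Lipschitz gradient, Ω ⊆ ℝ^d nonempty closed, α > 1, η > 0, and set t = α·max{L, η}. Then for any u ∈ Ω and u⁺ ∈ P_Ω(u - (1/t)∇h(u)), one has h(u⁺) ≤ h(u) - (1/2)(α - 1)η ‖u⁺ - u‖². -/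
open intervalIntegral in
lemma descent_aux {d : ℕ} (h : EuclideanSpace ℝ (Fin d) → ℝ)
    (g : EuclideanSpace ℝ (Fin d) → EuclideanSpace ℝ (Fin d))
    (hgrad : ∀ u, HasGradientAt h (g u) u)
    (hgcont : Continuous g)
    (L : ℝ) (hL : 0 ≤ L) (hLip : ∀ u v, ‖g u - g v‖ ≤ L * ‖u - v‖)
    (u v : EuclideanSpace ℝ (Fin d)) :
    h v ≤ h u + inner ℝ (g u) (v - u) + L/2 * ‖v - u‖^2 := by
  set Δ := v - u with hΔ
  set γ : ℝ → EuclideanSpace ℝ (Fin d) := fun s => u + s • Δ with hγ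
  have hγc : Continuous γ := by continuity
  have hγderiv : ∀ s : ℝ, HasDerivAt γ Δ s := by
    intro s
    have : HasDerivAt (fun s : ℝ => s • Δ) ((1 : ℝ) • Δ) s :=
      (hasDerivAt_id s).smul_const Δ
    simpa [γ] using this.const_add u
  have hφ : ∀ s : ℝ, HasDerivAt (fun s => h (γ s)) (inner ℝ (g (γ s)) Δ : ℝ) s := by
    intro s
    have hf := (hgrad (γ s)).hasFDerivAt.comp_hasDerivAt s (hγderiv s)
    simp at hf; exact hf
  have hcont : Continuous (fun s : ℝ => (inner ℝ (g (γ s)) Δ : ℝ)) := by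
    exact (hgcont.comp hγc).inner continuous_const
  have hint : ∫ s in (0:ℝ)..1, (inner ℝ (g (γ s)) Δ : ℝ) = h (γ 1) - h (γ 0) :=
    intervalIntegral.integral_eq_sub_of_hasDerivAt (fun s _ => hφ s)
      (hcont.intervalIntegrable 0 1)
  have hγ0 : γ 0 = u := by simp [γ]
  have hγ1 : γ 1 = v := by simp [γ, Δ]
  have hi2 : IntervalIntegrable (fun s : ℝ => (inner ℝ (g u) Δ + s * (L * ‖Δ‖^2) : ℝ))
      MeasureTheory.volume 0 1 :=
    Continuous.intervalIntegrable (by fun_prop) 0 1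
  have hmono : ∫ s in (0:ℝ)..1, (inner ℝ (g (γ s)) Δ : ℝ)
      ≤ ∫ s in (0:ℝ)..1, (inner ℝ (g u) Δ + s * (L * ‖Δ‖^2) : ℝ) := by
    apply intervalIntegral.integral_mono_on (by norm_num)
      (hcont.intervalIntegrable 0 1) hi2
    intro s hs
    have hs0 : 0 ≤ s := hs.1
    have h1 : (inner ℝ (g (γ s)) Δ : ℝ) - inner ℝ (g u) Δ = inner ℝ (g (γ s) - g u) Δ := by
      rw [inner_sub_left]
    have h2 : (inner ℝ (g (γ s) - g u) Δ : ℝ) ≤ ‖g (γ s) - g u‖ * ‖Δ‖ :=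
      real_inner_le_norm _ _
    have h3 : ‖g (γ s) - g u‖ ≤ L * ‖γ s - u‖ := hLip _ _
    have h4 : ‖γ s - u‖ = s * ‖Δ‖ := by
      simp [γ, norm_smul, abs_of_nonneg hs0]
    have h5 : ‖g (γ s) - g u‖ * ‖Δ‖ ≤ L * (s * ‖Δ‖) * ‖Δ‖ :=
      mul_le_mul_of_nonneg_right (h4 ▸ h3) (norm_nonneg Δ)
    nlinarith [h1, h2, h5]
  have hval : ∫ s in (0:ℝ)..1, (inner ℝ (g u) Δ + s * (L * ‖Δ‖^2) : ℝ)
      = inner ℝ (g u) Δ + L/2 * ‖Δ‖^2 := by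
    have hi3 : IntervalIntegrable (fun s : ℝ => s * (L * ‖Δ‖^2)) MeasureTheory.volume 0 1 :=
      Continuous.intervalIntegrable (by fun_prop) 0 1
    rw [intervalIntegral.integral_add (intervalIntegrable_const) hi3,
      intervalIntegral.integral_const, intervalIntegral.integral_mul_const, integral_id]
    simp; ring
  rw [hγ0, hγ1] at hint
  linarith [hmono.trans_eq hval, hint.symm.le, hint.le]

/-- Per-block sufficient decrease estimate for the PHeBIE algorithm: a projected
gradient step with stepsize `1/t`, `t = α·max{L, η}`, decreases `h` by at least
`(1/2)(α-1)η‖u⁺ - u‖²`. -/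
theorem stmt_10 {d : ℕ} (h : EuclideanSpace ℝ (Fin d) → ℝ)
    (g : EuclideanSpace ℝ (Fin d) → EuclideanSpace ℝ (Fin d))
    (hC1 : ContDiff ℝ 1 h)
    (hgrad : ∀ u, HasGradientAt h (g u) u)
    (L : ℝ) (hL : 0 ≤ L)
    (hLip : ∀ u v, ‖g u - g v‖ ≤ L * ‖u - v‖)
    (α η t : ℝ) (hα : 1 < α) (hη : 0 < η) (ht : t = α * max L η)
    (Ω : Set (EuclideanSpace ℝ (Fin d)))
    (hne : Ω.Nonempty) (hcl : IsClosed Ω)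
    (u : EuclideanSpace ℝ (Fin d)) (hu : u ∈ Ω)
    (up : EuclideanSpace ℝ (Fin d))
    (hupmem : up ∈ Ω)
    (hproj : ∀ w ∈ Ω, ‖up - (u - (1/t) • g u)‖ ≤ ‖w - (u - (1/t) • g u)‖) :
    h up ≤ h u - (1/2) * (α - 1) * η * ‖up - u‖^2 := by
  have hmax : η ≤ max L η := le_max_right _ _
  have hmaxL : L ≤ max L η := le_max_left _ _
  have ht0 : 0 < t := by
    rw [ht]; positivity
  -- continuity of g
  have hgcont : Continuous g := by
    rcases le_or_gt L 0 with h0 | h0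
    · have : ∀ x y, g x = g y := by
        intro x y
        have := hLip x y
        have : ‖g x - g y‖ ≤ 0 := this.trans (by nlinarith [norm_nonneg (x - y)])
        have := le_antisymm this (norm_nonneg _)
        simpa [sub_eq_zero] using norm_eq_zero.mp this
      exact continuous_const.congr fun x => (this (Classical.arbitrary _) x)
    · have : LipschitzWith L.toNNReal g := by
        apply LipschitzWith.of_dist_le_mul
        intro x y
        simpa [dist_eq_norm, Real.coe_toNNReal L hL] using hLip x y
      exact this.continuous
  -- descent lemma
  have hdesc := descent_aux h g hgrad hgcont L hL hLip u up
  -- projection inequality with w = u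
  have hp := hproj u hu
  have heq : u - (u - (1/t) • g u) = (1/t) • g u := by abel
  have heq2 : up - (u - (1/t) • g u) = (up - u) + (1/t) • g u := by abel
  rw [heq, heq2] at hp
  have hsq : ‖(up - u) + (1/t) • g u‖^2 ≤ ‖(1/t) • g u‖^2 := by
    exact pow_le_pow_left₀ (norm_nonneg _) hp 2
  rw [norm_add_sq_real] at hsq
  have hinner : (inner ℝ (up - u) ((1/t) • g u) : ℝ) = (1/t) * inner ℝ (up - u) (g u) := by
    rw [real_inner_smul_right]
  rw [hinner] at hsq
  -- so ‖up-u‖² + (2/t)⟪up-u, g u⟫ ≤ 0, hence ⟪g u, up-u⟫ ≤ -(t/2)‖up-u‖²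
  have hkey : (inner ℝ (g u) (up - u) : ℝ) ≤ -(t/2) * ‖up - u‖^2 := by
    have hcomm : (inner ℝ (g u) (up - u) : ℝ) = inner ℝ (up - u) (g u) := real_inner_comm _ _
    rw [hcomm]
    have := mul_le_mul_of_nonneg_left (by linarith : ‖up - u‖^2 + 2 * ((1/t) * inner ℝ (up - u) (g u)) ≤ 0) (le_of_lt ht0)
    have htne : t ≠ 0 := ne_of_gt ht0
    field_simp at this ⊢
    nlinarith
  have htL : (α - 1) * η ≤ t - L := by
    rw [ht]
    nlinarith
  nlinarith [sq_nonneg ‖up - u‖]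
end
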